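/- Let E(c) = λ E₀(c) + (1−λ) E₁(c) where E₀, E₁ are the expected hinge losses of threshold c for two uniform-density groups with thresholds t₀ < t₁ as in the uniform example (α₀+1 < α₁+1 < t₀−1 < t₀+1 < t₁−1 < t₁+1 < β₀−1 < β₁−1), with weights w₀, w₁. For every λ ∈ [0,1], E has a unique global minimizer c(λ), and c(λ) ∈ [t₀, t₁]. -/

import Mathlib

open MeasureTheory

/-- Expected hinge loss of the threshold classifier `sign (x - c)` for a group with
uniform density `w` on `[α, β]` and true threshold `t`. -/
noncomputable def hingeExp (α β t w : ℝ) (c : ℝ) : ℝ :=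
  ∫ x in Set.Icc α β, max 0 (1 - Real.sign (x - t) * (x - c)) * w

/-- closed-form core of the hinge loss -/
noncomputable def mphi (t c : ℝ) : ℝ := max 0 (t + 1 - c) ^ 2 + max 0 (c + 1 - t) ^ 2

lemma mphi_cont (t : ℝ) : Continuous (mphi t) := by
  unfold mphi
  apply Continuous.add
  · exact (continuous_const.max (continuous_const.sub continuous_id)).pow 2
  · exact (continuous_const.max ((continuous_id.add continuous_const).sub continuous_const)).pow 2

lemma measurable_rsign : Measurable Real.sign := by
  have : Real.sign = fun r : ℝ => if r < 0 then (-1 : ℝ) else if 0 < r then 1 else 0 := by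
    funext r; rfl
  rw [this]
  exact Measurable.ite (measurableSet_lt measurable_id measurable_const)
    measurable_const
    (Measurable.ite (measurableSet_lt measurable_const measurable_id)
      measurable_const measurable_const)

lemma abs_rsign_le (y : ℝ) : |Real.sign y| ≤ 1 := by
  rcases lt_trichotomy y 0 with h | h | h
  · rw [Real.sign_of_neg h]; norm_num
  · rw [h, Real.sign_zero]; norm_num
  · rw [Real.sign_of_pos h]; norm_num

lemma hinge_integrable (α β t w c : ℝ) :
    IntegrableOn (fun x => max 0 (1 - Real.sign (x - t) * (x - c)) * w) (Set.Icc α β) := by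
  have hmeas : Measurable fun x : ℝ => max 0 (1 - Real.sign (x - t) * (x - c)) * w := by
    refine Measurable.mul ?_ measurable_const
    refine Measurable.max measurable_const ?_
    refine Measurable.sub measurable_const ?_
    exact ((measurable_rsign.comp (measurable_id.sub measurable_const)).mul
      (measurable_id.sub measurable_const))
  refine Integrable.mono' (g := fun _ => (1 + (|α| + |β| + |c|)) * |w|)
    (integrableOn_const measure_Icc_lt_top.ne) hmeas.aestronglyMeasurable ?_
  filter_upwards [ae_restrict_mem measurableSet_Icc] with x hx
  have hx1 : |x| ≤ |α| + |β| := by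
    rcases hx with ⟨hxa, hxb⟩
    rw [abs_le]
    constructor
    · have := neg_abs_le α; have := abs_nonneg β; linarith
    · have := le_abs_self β; have := abs_nonneg α; linarith
  have hs := abs_rsign_le (x - t)
  have hxc : |x - c| ≤ |x| + |c| := abs_sub _ _
  have h1 : max 0 (1 - Real.sign (x - t) * (x - c)) ≤ 1 + (|α| + |β| + |c|) := by
    refine max_le (by positivity) ?_
    have : Real.sign (x - t) * (x - c) ≥ -(|x - c|) := by
      have h := abs_mul (Real.sign (x - t)) (x - c)
      have h2 : |Real.sign (x - t) * (x - c)| ≤ |x - c| := by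
        rw [h]
        nlinarith [abs_nonneg (x - c)]
      nlinarith [neg_abs_le (Real.sign (x - t) * (x - c))]
    nlinarith
  have h0 : (0:ℝ) ≤ max 0 (1 - Real.sign (x - t) * (x - c)) := le_max_left _ _
  rw [Real.norm_eq_abs, abs_mul, abs_of_nonneg h0]
  have : (0:ℝ) ≤ 1 + (|α| + |β| + |c|) := by positivity
  exact mul_le_mul_of_nonneg_right h1 (abs_nonneg w)
lemma int_left (a b c w : ℝ) :
    ∫ x in a..b, (1 + x - c) * w = ((1 + b - c) ^ 2 - (1 + a - c) ^ 2) * w / 2 := by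
  have h : ∀ x : ℝ, HasDerivAt (fun x => (1 + x - c) ^ 2 * w / 2) ((1 + x - c) * w) x := by
    intro x
    have h1 : HasDerivAt (fun x : ℝ => 1 + x - c) 1 x :=
      ((hasDerivAt_id x).const_add 1).sub_const c
    have h2 := ((h1.pow 2).mul_const w).div_const 2
    exact h2.congr_deriv (by ring)
  rw [intervalIntegral.integral_eq_sub_of_hasDerivAt (fun x _ => h x)
    (by apply Continuous.intervalIntegrable; continuity)]
  ring

lemma int_right (a b c w : ℝ) :
    ∫ x in a..b, (1 + c - x) * w = ((1 + c - a) ^ 2 - (1 + c - b) ^ 2) * w / 2 := by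
  have h : ∀ x : ℝ, HasDerivAt (fun x => -((1 + c - x) ^ 2) * w / 2) ((1 + c - x) * w) x := by
    intro x
    have h1 : HasDerivAt (fun x : ℝ => 1 + c - x) (-1) x := by
      simpa using ((hasDerivAt_id x).const_sub (1 + c))
    have h2 := (((h1.pow 2).neg).mul_const w).div_const 2
    exact h2.congr_deriv (by ring)
  rw [intervalIntegral.integral_eq_sub_of_hasDerivAt (fun x _ => h x)
    (by apply Continuous.intervalIntegrable; continuity)]
  ring

lemma ae_ne_real (t : ℝ) : ∀ᵐ x : ℝ, x ≠ t := by
  refine MeasureTheory.ae_iff.2 ?_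
  simpa using measure_singleton t

lemma hinge_eval (α β t w c : ℝ) (h1 : α ≤ c - 1) (h2 : c + 1 ≤ β)
    (h3 : α ≤ t) (h4 : t ≤ β) :
    hingeExp α β t w c = w * mphi t c / 2 := by
  have hαβ : α ≤ β := by linarith
  have contL : Continuous fun x : ℝ => max 0 (1 + x - c) * w := by
    apply Continuous.mul _ continuous_const
    exact continuous_const.max (by continuity)
  have contR : Continuous fun x : ℝ => max 0 (1 + c - x) * w := by
    apply Continuous.mul _ continuous_const
    exact continuous_const.max (by continuity)
  have hint : ∀ a b : ℝ, α ≤ a → a ≤ b → b ≤ β →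
      IntervalIntegrable (fun x => max 0 (1 - Real.sign (x - t) * (x - c)) * w) volume a b := by
    intro a b ha hab hb
    rw [intervalIntegrable_iff_integrableOn_Ioc_of_le hab]
    exact (hinge_integrable α β t w c).mono_set
      (fun x hx => ⟨le_trans ha (le_of_lt hx.1), le_trans hx.2 hb⟩)
  unfold hingeExp
  rw [MeasureTheory.integral_Icc_eq_integral_Ioc, ← intervalIntegral.integral_of_le hαβ]
  rw [← intervalIntegral.integral_add_adjacent_intervals (hint α t le_rfl h3 h4)
    (hint t β h3 h4 le_rfl)]
  have hL : (∫ x in α..t, max 0 (1 - Real.sign (x - t) * (x - c)) * w)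
      = w * max 0 (t + 1 - c) ^ 2 / 2 := by
    have e1 : (∫ x in α..t, max 0 (1 - Real.sign (x - t) * (x - c)) * w)
        = ∫ x in α..t, max 0 (1 + x - c) * w := by
      apply intervalIntegral.integral_congr_ae
      filter_upwards [ae_ne_real t] with x hx hmem
      rw [Set.uIoc_of_le h3] at hmem
      have hxt : x < t := lt_of_le_of_ne hmem.2 hx
      rw [Real.sign_of_neg (by linarith : x - t < 0)]
      have : 1 - (-1 : ℝ) * (x - c) = 1 + x - c := by ring
      rw [this]
    rw [e1]
    rcases le_total (c - 1) t with hct | hct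
    · rw [← intervalIntegral.integral_add_adjacent_intervals
        (a := α) (b := c - 1) (c := t)
        (contL.intervalIntegrable _ _) (contL.intervalIntegrable _ _)]
      have ez : (∫ x in α..(c - 1), max 0 (1 + x - c) * w) = 0 := by
        rw [intervalIntegral.integral_congr (g := fun _ => 0), intervalIntegral.integral_zero]
        intro x hx
        rw [Set.uIcc_of_le h1] at hx
        have : 1 + x - c ≤ 0 := by have := hx.2; linarith
        simp [max_eq_left this]
      have e2 : (∫ x in (c - 1)..t, max 0 (1 + x - c) * w)
          = ((1 + t - c) ^ 2 - (1 + (c - 1) - c) ^ 2) * w / 2 := by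
        rw [intervalIntegral.integral_congr (g := fun x => (1 + x - c) * w), int_left]
        intro x hx
        rw [Set.uIcc_of_le hct] at hx
        have : (0:ℝ) ≤ 1 + x - c := by have := hx.1; linarith
        simp only [max_eq_right this]
      rw [ez, e2, max_eq_right (by linarith : (0:ℝ) ≤ t + 1 - c)]
      ring
    · rw [intervalIntegral.integral_congr (g := fun _ => 0), intervalIntegral.integral_zero,
        max_eq_left (by linarith : t + 1 - c ≤ 0)]
      · ring
      · intro x hx
        rw [Set.uIcc_of_le h3] at hx
        have : 1 + x - c ≤ 0 := by have := hx.2; linarith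
        simp [max_eq_left this]
  have hR : (∫ x in t..β, max 0 (1 - Real.sign (x - t) * (x - c)) * w)
      = w * max 0 (c + 1 - t) ^ 2 / 2 := by
    have e1 : (∫ x in t..β, max 0 (1 - Real.sign (x - t) * (x - c)) * w)
        = ∫ x in t..β, max 0 (1 + c - x) * w := by
      apply intervalIntegral.integral_congr_ae
      filter_upwards [ae_ne_real t] with x hx hmem
      rw [Set.uIoc_of_le h4] at hmem
      have hxt : t < x := hmem.1
      rw [Real.sign_of_pos (by linarith : (0:ℝ) < x - t)]
      have : 1 - (1 : ℝ) * (x - c) = 1 + c - x := by ring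
      rw [this]
    rw [e1]
    rcases le_total t (c + 1) with hct | hct
    · rw [← intervalIntegral.integral_add_adjacent_intervals
        (a := t) (b := c + 1) (c := β)
        (contR.intervalIntegrable _ _) (contR.intervalIntegrable _ _)]
      have e2 : (∫ x in t..(c + 1), max 0 (1 + c - x) * w)
          = ((1 + c - t) ^ 2 - (1 + c - (c + 1)) ^ 2) * w / 2 := by
        rw [intervalIntegral.integral_congr (g := fun x => (1 + c - x) * w), int_right]
        intro x hx
        rw [Set.uIcc_of_le hct] at hx
        have : (0:ℝ) ≤ 1 + c - x := by have := hx.2; linarith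
        simp only [max_eq_right this]
      have ez : (∫ x in (c + 1)..β, max 0 (1 + c - x) * w) = 0 := by
        rw [intervalIntegral.integral_congr (g := fun _ => 0), intervalIntegral.integral_zero]
        intro x hx
        rw [Set.uIcc_of_le h2] at hx
        have : 1 + c - x ≤ 0 := by have := hx.1; linarith
        simp [max_eq_left this]
      rw [ez, e2, max_eq_right (by linarith : (0:ℝ) ≤ c + 1 - t)]
      ring
    · rw [intervalIntegral.integral_congr (g := fun _ => 0), intervalIntegral.integral_zero,
        max_eq_left (by linarith : c + 1 - t ≤ 0)]
      · ring
      · intro x hx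
        rw [Set.uIcc_of_le h4] at hx
        have : 1 + c - x ≤ 0 := by have := hx.1; linarith
        simp [max_eq_left this]
  rw [hL, hR]
  unfold mphi
  ring
lemma hinge_convexOn (α β t w : ℝ) (hw : 0 ≤ w) :
    ConvexOn ℝ Set.univ (hingeExp α β t w) := by
  refine ⟨convex_univ, fun x _ y _ p q hp hq hpq => ?_⟩
  have hx := hinge_integrable α β t w x
  have hy := hinge_integrable α β t w y
  simp only [smul_eq_mul]
  unfold hingeExp
  have key : ∀ z ∈ Set.Icc α β,
      max 0 (1 - Real.sign (z - t) * (z - (p * x + q * y))) * w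
        ≤ p * (max 0 (1 - Real.sign (z - t) * (z - x)) * w)
          + q * (max 0 (1 - Real.sign (z - t) * (z - y)) * w) := by
    intro z _
    have e : 1 - Real.sign (z - t) * (z - (p * x + q * y))
        = p * (1 - Real.sign (z - t) * (z - x)) + q * (1 - Real.sign (z - t) * (z - y)) := by
      linear_combination (Real.sign (z - t) * z - 1) * hpq
    rw [e]
    have h1 : max 0 (p * (1 - Real.sign (z - t) * (z - x)) + q * (1 - Real.sign (z - t) * (z - y)))
        ≤ p * max 0 (1 - Real.sign (z - t) * (z - x)) + q * max 0 (1 - Real.sign (z - t) * (z - y)) := by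
      refine max_le ?_ ?_
      · have := le_max_left 0 (1 - Real.sign (z - t) * (z - x))
        have := le_max_left 0 (1 - Real.sign (z - t) * (z - y))
        positivity
      · exact add_le_add (mul_le_mul_of_nonneg_left (le_max_right _ _) hp)
          (mul_le_mul_of_nonneg_left (le_max_right _ _) hq)
    calc max 0 (p * (1 - Real.sign (z - t) * (z - x)) + q * (1 - Real.sign (z - t) * (z - y))) * w
        ≤ (p * max 0 (1 - Real.sign (z - t) * (z - x))
            + q * max 0 (1 - Real.sign (z - t) * (z - y))) * w :=
          mul_le_mul_of_nonneg_right h1 hw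
      _ = p * (max 0 (1 - Real.sign (z - t) * (z - x)) * w)
            + q * (max 0 (1 - Real.sign (z - t) * (z - y)) * w) := by ring
  calc (∫ z in Set.Icc α β, max 0 (1 - Real.sign (z - t) * (z - (p * x + q * y))) * w)
      ≤ ∫ z in Set.Icc α β, (p * (max 0 (1 - Real.sign (z - t) * (z - x)) * w)
          + q * (max 0 (1 - Real.sign (z - t) * (z - y)) * w)) :=
        setIntegral_mono_on (hinge_integrable α β t w (p * x + q * y))
          ((hx.const_mul p).add (hy.const_mul q)) measurableSet_Icc key
    _ = p * (∫ z in Set.Icc α β, max 0 (1 - Real.sign (z - t) * (z - x)) * w)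
          + q * ∫ z in Set.Icc α β, max 0 (1 - Real.sign (z - t) * (z - y)) * w := by
        rw [integral_add (hx.const_mul p) (hy.const_mul q),
          integral_const_mul, integral_const_mul]

lemma max_sq_mid (a b : ℝ) :
    2 * max 0 ((a + b) / 2) ^ 2 ≤ max 0 a ^ 2 + max 0 b ^ 2 - (max 0 a - max 0 b) ^ 2 / 2 := by
  have ha := le_max_left 0 a
  have hb := le_max_left 0 b
  have ha' := le_max_right 0 a
  have hb' := le_max_right 0 b
  have h : max 0 ((a + b) / 2) ≤ (max 0 a + max 0 b) / 2 := by
    refine max_le (by linarith) (by linarith)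
  have h0 : (0:ℝ) ≤ max 0 ((a + b) / 2) := le_max_left _ _
  nlinarith [mul_self_le_mul_self h0 h]

lemma Fdiff {u v : ℝ} (h : v ≤ u) :
    u - v ≤ (max 0 u - max 0 (2 - u)) - (max 0 v - max 0 (2 - v)) := by
  have e : ∀ x : ℝ, max 0 x = (x + |x|) / 2 := by
    intro x
    rcases le_total 0 x with hx | hx
    · rw [max_eq_right hx, abs_of_nonneg hx]; ring
    · rw [max_eq_left hx, abs_of_nonpos hx]; ring
  rw [e, e, e, e]
  rcases abs_cases u with ⟨e1, _⟩ | ⟨e1, h1⟩ <;>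
    rcases abs_cases v with ⟨e2, h2⟩ | ⟨e2, _⟩ <;>
    rcases abs_cases (2 - u) with ⟨e3, h3⟩ | ⟨e3, h3⟩ <;>
    rcases abs_cases (2 - v) with ⟨e4, h4⟩ | ⟨e4, h4⟩ <;>
    rw [e1, e2, e3, e4] <;> linarith

lemma max_diff_sq (u v : ℝ) :
    (u - v) ^ 2 / 2 ≤ (max 0 u - max 0 v) ^ 2 + (max 0 (2 - u) - max 0 (2 - v)) ^ 2 := by
  have hpq : (max 0 u - max 0 v) ^ 2 + (max 0 (2 - v) - max 0 (2 - u)) ^ 2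
      ≥ ((max 0 u - max 0 v) + (max 0 (2 - v) - max 0 (2 - u))) ^ 2 / 2 := by
    nlinarith [sq_nonneg ((max 0 u - max 0 v) - (max 0 (2 - v) - max 0 (2 - u)))]
  have h2 : (u - v) ^ 2 ≤ ((max 0 u - max 0 v) + (max 0 (2 - v) - max 0 (2 - u))) ^ 2 := by
    rcases le_total v u with h | h
    · have hf := Fdiff h
      nlinarith
    · have hf := Fdiff h
      nlinarith
  nlinarith [hpq, h2]

lemma mphi_mid (t x y : ℝ) :
    (x - y) ^ 2 / 4 ≤ mphi t x + mphi t y - 2 * mphi t ((x + y) / 2) := by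
  unfold mphi
  have e1 : t + 1 - (x + y) / 2 = ((t + 1 - x) + (t + 1 - y)) / 2 := by ring
  have e2 : (x + y) / 2 + 1 - t = ((2 - (t + 1 - x)) + (2 - (t + 1 - y))) / 2 := by ring
  have e3 : x + 1 - t = 2 - (t + 1 - x) := by ring
  have e4 : y + 1 - t = 2 - (t + 1 - y) := by ring
  rw [e1, e2, e3, e4]
  have A := max_sq_mid (t + 1 - x) (t + 1 - y)
  have B := max_sq_mid (2 - (t + 1 - x)) (2 - (t + 1 - y))
  have C := max_diff_sq (t + 1 - x) (t + 1 - y)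
  nlinarith [A, B, C]
set_option maxHeartbeats 1000000 in
theorem stmt_15 (α₀ β₀ α₁ β₁ t₀ t₁ : ℝ)
    (h1 : α₀ + 1 < α₁ + 1) (h2 : α₁ + 1 < t₀ - 1) (h3 : t₀ + 1 < t₁ - 1)
    (h4 : t₁ + 1 < β₀ - 1) (h5 : β₀ - 1 < β₁ - 1) :
    ∀ lam ∈ Set.Icc (0:ℝ) 1,
      ∃ c, c ∈ Set.Icc t₀ t₁ ∧
        (∀ y, lam * hingeExp α₀ β₀ t₀ (1 / (β₀ - α₀)) c
            + (1 - lam) * hingeExp α₁ β₁ t₁ (1 / (β₁ - α₁)) c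
          ≤ lam * hingeExp α₀ β₀ t₀ (1 / (β₀ - α₀)) y
            + (1 - lam) * hingeExp α₁ β₁ t₁ (1 / (β₁ - α₁)) y) ∧
        (∀ c', (∀ y, lam * hingeExp α₀ β₀ t₀ (1 / (β₀ - α₀)) c'
            + (1 - lam) * hingeExp α₁ β₁ t₁ (1 / (β₁ - α₁)) c'
          ≤ lam * hingeExp α₀ β₀ t₀ (1 / (β₀ - α₀)) y
            + (1 - lam) * hingeExp α₁ β₁ t₁ (1 / (β₁ - α₁)) y) → c' = c) := by
  intro lam hlam
  obtain ⟨hl0, hl1⟩ := hlam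
  set w₀ : ℝ := 1 / (β₀ - α₀) with hw₀def
  set w₁ : ℝ := 1 / (β₁ - α₁) with hw₁def
  have hw₀ : 0 < w₀ := by rw [hw₀def]; exact one_div_pos.2 (by linarith)
  have hw₁ : 0 < w₁ := by rw [hw₁def]; exact one_div_pos.2 (by linarith)
  have hl1' : (0:ℝ) ≤ 1 - lam := by linarith
  set G : ℝ → ℝ := fun z => lam * (w₀ * mphi t₀ z / 2) + (1 - lam) * (w₁ * mphi t₁ z / 2)
    with hGdef
  have hE : ∀ z ∈ Set.Icc (t₀ - 1) (t₁ + 1),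
      lam * hingeExp α₀ β₀ t₀ w₀ z + (1 - lam) * hingeExp α₁ β₁ t₁ w₁ z = G z := by
    intro z hz
    obtain ⟨hz1, hz2⟩ := hz
    rw [hinge_eval α₀ β₀ t₀ w₀ z (by linarith) (by linarith) (by linarith) (by linarith),
        hinge_eval α₁ β₁ t₁ w₁ z (by linarith) (by linarith) (by linarith) (by linarith)]
  have hGcont : Continuous G := by
    apply Continuous.add
    · exact continuous_const.mul ((continuous_const.mul (mphi_cont t₀)).div_const 2)
    · exact continuous_const.mul ((continuous_const.mul (mphi_cont t₁)).div_const 2)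
  obtain ⟨c, hcK, hcmin⟩ := isCompact_Icc.exists_isMinOn
    (Set.nonempty_Icc.2 (by linarith : t₀ - 1 ≤ t₁ + 1)) hGcont.continuousOn
  obtain ⟨hcK1, hcK2⟩ := hcK
  have hmin : ∀ y ∈ Set.Icc (t₀ - 1) (t₁ + 1), G c ≤ G y := fun y hy => isMinOn_iff.1 hcmin y hy
  have hcoef : 0 < lam * w₀ + (1 - lam) * w₁ := by
    rcases eq_or_lt_of_le hl0 with h | h
    · rw [← h]; simpa using hw₁
    · nlinarith [mul_pos h hw₀, mul_nonneg hl1' hw₁.le]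
  have hstrict : ∀ y ∈ Set.Icc (t₀ - 1) (t₁ + 1), y ≠ c → G c < G y := by
    intro y hy hne
    obtain ⟨hy1, hy2⟩ := hy
    have hm : (c + y) / 2 ∈ Set.Icc (t₀ - 1) (t₁ + 1) := ⟨by linarith, by linarith⟩
    have h0 := mphi_mid t₀ c y
    have h1 := mphi_mid t₁ c y
    have hmid := hmin _ hm
    have hcy : c - y ≠ 0 := sub_ne_zero.2 (Ne.symm hne)
    have k0 : lam * w₀ * ((c - y) ^ 2 / 4)
        ≤ lam * w₀ * (mphi t₀ c + mphi t₀ y - 2 * mphi t₀ ((c + y) / 2)) :=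
      mul_le_mul_of_nonneg_left h0 (mul_nonneg hl0 hw₀.le)
    have k1 : (1 - lam) * w₁ * ((c - y) ^ 2 / 4)
        ≤ (1 - lam) * w₁ * (mphi t₁ c + mphi t₁ y - 2 * mphi t₁ ((c + y) / 2)) :=
      mul_le_mul_of_nonneg_left h1 (mul_nonneg hl1' hw₁.le)
    have kpos : 0 < (lam * w₀ + (1 - lam) * w₁) * ((c - y) ^ 2 / 4) :=
      mul_pos hcoef (by positivity)
    simp only [hGdef] at hmid ⊢
    linarith [k0, k1, kpos, hmid]
  have hct0 : t₀ ≤ c := by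
    by_contra hcon
    push_neg at hcon
    have hle := hmin t₀ ⟨by linarith, by linarith⟩
    have e1 : mphi t₀ c = (t₀ + 1 - c) ^ 2 + (c + 1 - t₀) ^ 2 := by
      unfold mphi
      rw [max_eq_right (by linarith : (0:ℝ) ≤ t₀ + 1 - c),
          max_eq_right (by linarith : (0:ℝ) ≤ c + 1 - t₀)]
    have e2 : mphi t₀ t₀ = 2 := by
      unfold mphi
      rw [max_eq_right (by linarith : (0:ℝ) ≤ t₀ + 1 - t₀)]
      ring_nf
    have e3 : mphi t₁ c = (t₁ + 1 - c) ^ 2 := by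
      unfold mphi
      rw [max_eq_right (by linarith : (0:ℝ) ≤ t₁ + 1 - c),
          max_eq_left (by linarith : c + 1 - t₁ ≤ 0)]
      ring
    have e4 : mphi t₁ t₀ = (t₁ + 1 - t₀) ^ 2 := by
      unfold mphi
      rw [max_eq_right (by linarith : (0:ℝ) ≤ t₁ + 1 - t₀),
          max_eq_left (by linarith : t₀ + 1 - t₁ ≤ 0)]
      ring
    have hne0 : (t₀ - c) ^ 2 ≠ 0 := pow_ne_zero 2 (sub_ne_zero.2 (ne_of_gt hcon))
    have hd0 : 0 < (t₀ - c) ^ 2 := lt_of_le_of_ne (sq_nonneg _) (Ne.symm hne0)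
    have hd1 : 0 < (t₁ + 1 - c) ^ 2 - (t₁ + 1 - t₀) ^ 2 := by nlinarith
    simp only [hGdef] at hle
    rw [e1, e2, e3, e4] at hle
    rcases eq_or_lt_of_le hl0 with h | h
    · rw [← h] at hle; norm_num at hle; nlinarith [mul_pos hw₁ hd1]
    · nlinarith [mul_pos (mul_pos h hw₀) hd0, mul_nonneg (mul_nonneg hl1' hw₁.le) hd1.le]
  have hct1 : c ≤ t₁ := by
    by_contra hcon
    push_neg at hcon
    have hle := hmin t₁ ⟨by linarith, by linarith⟩
    have e1 : mphi t₁ c = (t₁ + 1 - c) ^ 2 + (c + 1 - t₁) ^ 2 := by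
      unfold mphi
      rw [max_eq_right (by linarith : (0:ℝ) ≤ t₁ + 1 - c),
          max_eq_right (by linarith : (0:ℝ) ≤ c + 1 - t₁)]
    have e2 : mphi t₁ t₁ = 2 := by
      unfold mphi
      rw [max_eq_right (by linarith : (0:ℝ) ≤ t₁ + 1 - t₁)]
      ring_nf
    have e3 : mphi t₀ c = (c + 1 - t₀) ^ 2 := by
      unfold mphi
      rw [max_eq_left (by linarith : t₀ + 1 - c ≤ 0),
          max_eq_right (by linarith : (0:ℝ) ≤ c + 1 - t₀)]
      ring
    have e4 : mphi t₀ t₁ = (t₁ + 1 - t₀) ^ 2 := by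
      unfold mphi
      rw [max_eq_left (by linarith : t₀ + 1 - t₁ ≤ 0),
          max_eq_right (by linarith : (0:ℝ) ≤ t₁ + 1 - t₀)]
      ring
    have hne0 : (t₁ - c) ^ 2 ≠ 0 := pow_ne_zero 2 (sub_ne_zero.2 (ne_of_lt hcon))
    have hd0 : 0 < (t₁ - c) ^ 2 := lt_of_le_of_ne (sq_nonneg _) (Ne.symm hne0)
    have hd1 : 0 < (c + 1 - t₀) ^ 2 - (t₁ + 1 - t₀) ^ 2 := by nlinarith
    simp only [hGdef] at hle
    rw [e1, e2, e3, e4] at hle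
    rcases eq_or_lt_of_le hl1 with h | h
    · rw [h] at hle; norm_num at hle; nlinarith [mul_pos hw₀ hd1]
    · nlinarith [mul_pos (mul_pos (by linarith : (0:ℝ) < 1 - lam) hw₁) hd0,
        mul_nonneg (mul_nonneg hl0 hw₀.le) hd1.le]
  have hconv : ConvexOn ℝ Set.univ
      (fun z => lam * hingeExp α₀ β₀ t₀ w₀ z + (1 - lam) * hingeExp α₁ β₁ t₁ w₁ z) := by
    have hc0 := (hinge_convexOn α₀ β₀ t₀ w₀ hw₀.le).smul hl0
    have hc1 := (hinge_convexOn α₁ β₁ t₁ w₁ hw₁.le).smul hl1'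
    exact hc0.add hc1
  have hglobal : ∀ y, y ∉ Set.Icc (t₀ - 1) (t₁ + 1) →
      G c < lam * hingeExp α₀ β₀ t₀ w₀ y + (1 - lam) * hingeExp α₁ β₁ t₁ w₁ y := by
    intro y hy
    rw [Set.mem_Icc, not_and_or, not_le, not_le] at hy
    rcases hy with hy | hy
    · have hcy : 0 < c - y := by linarith
      set a : ℝ := (c - (t₀ - 1)) / (c - y) with hadef
      set b : ℝ := ((t₀ - 1) - y) / (c - y) with hbdef
      have ha : 0 < a := div_pos (by linarith) hcy
      have hb : 0 < b := div_pos (by linarith) hcy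
      have hab : a + b = 1 := by rw [hadef, hbdef]; field_simp; ring
      have hcomb := hconv.2 (Set.mem_univ y) (Set.mem_univ c) ha.le hb.le hab
      simp only [smul_eq_mul] at hcomb
      have hpt : a * y + b * c = t₀ - 1 := by
        rw [hadef, hbdef]; field_simp; ring
      rw [hpt] at hcomb
      rw [hE (t₀ - 1) ⟨le_rfl, by linarith⟩, hE c ⟨by linarith, by linarith⟩] at hcomb
      have hGp : G c < G (t₀ - 1) :=
        hstrict (t₀ - 1) ⟨le_rfl, by linarith⟩ (by intro h; linarith [h ▸ hct0])
      have hbeq : b = 1 - a := by linarith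
      rw [hbeq] at hcomb
      by_contra hcontra
      push_neg at hcontra
      have := mul_le_mul_of_nonneg_left hcontra ha.le
      nlinarith [hcomb, hGp, this]
    · have hcy : 0 < y - c := by linarith
      set a : ℝ := (y - (t₁ + 1)) / (y - c) with hadef
      set b : ℝ := ((t₁ + 1) - c) / (y - c) with hbdef
      have ha : 0 < a := div_pos (by linarith) hcy
      have hb : 0 < b := div_pos (by linarith) hcy
      have hab : a + b = 1 := by rw [hadef, hbdef]; field_simp; ring
      have hcomb := hconv.2 (Set.mem_univ c) (Set.mem_univ y) ha.le hb.le hab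
      simp only [smul_eq_mul] at hcomb
      have hpt : a * c + b * y = t₁ + 1 := by
        rw [hadef, hbdef]; field_simp; ring
      rw [hpt] at hcomb
      rw [hE (t₁ + 1) ⟨by linarith, le_rfl⟩, hE c ⟨by linarith, by linarith⟩] at hcomb
      have hGp : G c < G (t₁ + 1) :=
        hstrict (t₁ + 1) ⟨by linarith, le_rfl⟩ (by intro h; linarith [h ▸ hct1])
      have haeq : a = 1 - b := by linarith
      rw [haeq] at hcomb
      by_contra hcontra
      push_neg at hcontra
      have := mul_le_mul_of_nonneg_left hcontra hb.le
      nlinarith [hcomb, hGp, this]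
  refine ⟨c, ⟨hct0, hct1⟩, ?_, ?_⟩
  · intro y
    by_cases hy : y ∈ Set.Icc (t₀ - 1) (t₁ + 1)
    · rw [hE c ⟨by linarith, by linarith⟩, hE y hy]
      exact hmin y hy
    · rw [hE c ⟨by linarith, by linarith⟩]
      exact (hglobal y hy).le
  · intro c' hc'
    by_contra hne
    have hcc := hc' c
    rw [hE c ⟨by linarith, by linarith⟩] at hcc
    by_cases hc'K : c' ∈ Set.Icc (t₀ - 1) (t₁ + 1)
    · rw [hE c' hc'K] at hcc
      exact absurd hcc (not_le.2 (hstrict c' hc'K hne))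
    · exact absurd hcc (not_le.2 (hglobal c' hc'K))
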